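/- Let n ≥ 1, let q ≥ 1 be a natural number, and let f : ℝⁿ → ℝ be a bounded measurable 2π-periodic function with zero average, i.e. ∫_{[0,2π)ⁿ} f(x) dx = 0. Then ∫_{[0,2π)ⁿ} ∫_{[0,2π)ⁿ} (f(x) − f(y))^{2q} dy dx ≥ 2·(2π)ⁿ·∫_{[0,2π)ⁿ} f(x)^{2q} dx. -/

import Mathlib

open MeasureTheory

section Aux

variable {α : Type*} [MeasurableSpace α] {μ : Measure α} [IsFiniteMeasure μ] [NeZero μ]

lemma integrable_of_abs_le {h : α → ℝ} (hm : AEStronglyMeasurable h μ) {D : ℝ}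
    (hD : ∀ x, |h x| ≤ D) : Integrable h μ :=
  ⟨hm, HasFiniteIntegral.of_bounded (C := D)
    (ae_of_all _ (by simpa [Real.norm_eq_abs] using hD))⟩

lemma jensen_pow {g : α → ℝ} (hg : Measurable g) {C : ℝ} (hC : ∀ x, |g x| ≤ C)
    (hzero : ∫ x, g x ∂μ = 0) (m : ℕ) (hm : Even m) (z : ℝ) :
    (μ Set.univ).toReal * z ^ m ≤ ∫ x, (g x - z) ^ m ∂μ := by
  set V := (μ Set.univ).toReal with hV
  have hVne : V ≠ 0 :=
    ENNReal.toReal_ne_zero.2 ⟨Measure.measure_univ_ne_zero.2 (NeZero.ne μ), measure_ne_top μ _⟩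
  have hVpos : 0 < V := lt_of_le_of_ne ENNReal.toReal_nonneg (Ne.symm hVne)
  have hgi : Integrable g μ := integrable_of_abs_le hg.aestronglyMeasurable hC
  have hfi : Integrable (fun x => g x - z) μ :=
    integrable_of_abs_le ((hg.sub measurable_const).aestronglyMeasurable)
      (D := C + |z|) (fun x => (abs_sub _ _).trans (add_le_add_left (hC x) _))
  have hgi2 : Integrable (fun x => (g x - z) ^ m) μ :=
    integrable_of_abs_le (((hg.sub measurable_const).pow_const m).aestronglyMeasurable)
      (D := (C + |z|) ^ m) (fun x => by
        rw [abs_pow]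
        exact pow_le_pow_left₀ (abs_nonneg _)
          ((abs_sub _ _).trans (add_le_add_left (hC x) _)) _)
  have key := hm.convexOn_pow.map_average_le (continuous_pow m).continuousOn isClosed_univ
    (ae_of_all _ fun x => Set.mem_univ _) hfi hgi2
  have havg : (⨍ x, (g x - z) ∂μ) = -z := by
    rw [average_eq, integral_sub hgi (integrable_const z), hzero, integral_const, zero_sub,
      smul_eq_mul, smul_eq_mul, measureReal_def, ← hV]
    field_simp
  rw [havg, hm.neg_pow] at key
  calc V * z ^ m ≤ V * ⨍ x, (g x - z) ^ m ∂μ := by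
        exact mul_le_mul_of_nonneg_left key hVpos.le
    _ = ∫ x, (g x - z) ^ m ∂μ := by
        rw [average_eq, smul_eq_mul, measureReal_def, ← hV, ← mul_assoc, mul_inv_cancel₀ hVne, one_mul]

lemma hasDeriv_int_pow {g : α → ℝ} (hg : Measurable g) {C : ℝ} (hC : ∀ x, |g x| ≤ C)
    (m : ℕ) (z : ℝ) :
    HasDerivAt (fun t => ∫ x, (g x - t) ^ m ∂μ)
      (-(m : ℝ) * ∫ x, (g x - z) ^ (m - 1) ∂μ) z := by
  have habs : ∀ (t : ℝ) (k : ℕ) (x : α), |(g x - t) ^ k| ≤ (C + |t|) ^ k := fun t k x => by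
    rw [abs_pow]
    exact pow_le_pow_left₀ (abs_nonneg _) ((abs_sub _ _).trans (add_le_add_left (hC x) _)) _
  have key := hasDerivAt_integral_of_dominated_loc_of_deriv_le (μ := μ) (x₀ := z)
    (F := fun t x => (g x - t) ^ m)
    (F' := fun t x => (m : ℝ) * (g x - t) ^ (m - 1) * (-1))
    (bound := fun _ => (m : ℝ) * (C + |z| + 1) ^ (m - 1))
    (s := Metric.ball z 1) (Metric.ball_mem_nhds z one_pos)
    (Filter.Eventually.of_forall fun t =>
      ((hg.sub measurable_const).pow_const m).aestronglyMeasurable)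
    (integrable_of_abs_le ((hg.sub measurable_const).pow_const m).aestronglyMeasurable
      (habs z m))
    ((((hg.sub measurable_const).pow_const (m - 1)).const_mul _).mul_const
      (-1)).aestronglyMeasurable
    (ae_of_all _ fun x t ht => by
      have h1 : |t| ≤ |z| + 1 := by
        have := Metric.mem_ball.1 ht
        rw [Real.dist_eq] at this
        calc |t| = |z + (t - z)| := by ring_nf
          _ ≤ |z| + |t - z| := abs_add_le _ _
          _ ≤ |z| + 1 := by linarith
      have h2 : |g x - t| ≤ C + |z| + 1 :=
        (abs_sub _ _).trans (by have := hC x; linarith)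
      have heq : ‖(m : ℝ) * (g x - t) ^ (m - 1) * (-1)‖
          = (m : ℝ) * |g x - t| ^ (m - 1) := by
        rw [Real.norm_eq_abs, abs_mul, abs_mul, abs_neg, abs_one, mul_one, Nat.abs_cast, abs_pow]
      rw [heq]
      exact mul_le_mul_of_nonneg_left
        (pow_le_pow_left₀ (abs_nonneg _) h2 _) (Nat.cast_nonneg _))
    (integrable_const _)
    (ae_of_all _ fun x t ht => ((hasDerivAt_id t).const_sub (g x)).pow m)
  have heq : (fun x => (m : ℝ) * (g x - z) ^ (m - 1) * (-1))
      = fun x => -(m : ℝ) * ((g x - z) ^ (m - 1)) := by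
    funext x; ring
  have := key.2
  rw [heq, integral_const_mul] at this
  exact this

lemma claimA {g : α → ℝ} (hg : Measurable g) {C : ℝ} (hC0 : 0 ≤ C) (hC : ∀ x, |g x| ≤ C)
    (q : ℕ) (hq : 1 ≤ q) (hzero : ∫ x, g x ∂μ = 0) :
    2 * (μ Set.univ).toReal * ∫ x, g x ^ (2 * q) ∂μ ≤
      ∫ x, ∫ y, (g x - g y) ^ (2 * q) ∂μ ∂μ := by
  set V := (μ Set.univ).toReal with hV
  have hVne : V ≠ 0 :=
    ENNReal.toReal_ne_zero.2 ⟨Measure.measure_univ_ne_zero.2 (NeZero.ne μ), measure_ne_top μ _⟩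
  have hVpos : 0 < V := lt_of_le_of_ne ENNReal.toReal_nonneg (Ne.symm hVne)
  have habs : ∀ (t : ℝ) (k : ℕ) (x : α), |(g x - t) ^ k| ≤ (C + |t|) ^ k := fun t k x => by
    rw [abs_pow]
    exact pow_le_pow_left₀ (abs_nonneg _) ((abs_sub _ _).trans (add_le_add_left (hC x) _)) _
  set F : ℝ → ℝ := fun z => ∫ x, (g x - z) ^ (2 * q) ∂μ with hF
  set u : ℝ → ℝ := fun z => F z - V * z ^ (2 * q) with hu
  set u' : ℝ → ℝ := fun z =>
    (-(2 * q : ℕ) : ℝ) * ∫ x, (g x - z) ^ (2 * q - 1) ∂μ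
      - V * ((2 * q : ℕ) * z ^ (2 * q - 1)) with hu'
  have hdu : ∀ z, HasDerivAt u (u' z) z := fun z => by
    have h1 : HasDerivAt F ((-(2 * q : ℕ) : ℝ) * ∫ x, (g x - z) ^ (2 * q - 1) ∂μ) z :=
      hasDeriv_int_pow hg hC (2 * q) z
    have h2 : HasDerivAt (fun z : ℝ => V * z ^ (2 * q))
        (V * ((2 * q : ℕ) * z ^ (2 * q - 1))) z :=
      (hasDerivAt_pow (2 * q) z).const_mul V
    exact h1.sub h2
  have hconv : ConvexOn ℝ Set.univ u := by
    refine convexOn_of_hasDerivWithinAt2_nonneg convex_univ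
      (f' := u')
      (f'' := fun z => ((2 * q : ℕ) : ℝ) * ((2 * q - 1 : ℕ) : ℝ) *
        ((∫ x, (g x - z) ^ (2 * q - 2) ∂μ) - V * z ^ (2 * q - 2)))
      (fun z _ => (hdu z).continuousAt.continuousWithinAt) ?_ ?_ ?_
    · intro z _
      exact ((hdu z).hasDerivWithinAt)
    · intro z _
      have h1 : HasDerivAt (fun z => (-(2 * q : ℕ) : ℝ) * ∫ x, (g x - z) ^ (2 * q - 1) ∂μ)
          ((-(2 * q : ℕ) : ℝ) * ((-(2 * q - 1 : ℕ) : ℝ) * ∫ x, (g x - z) ^ (2 * q - 1 - 1) ∂μ)) z :=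
        (hasDeriv_int_pow hg hC (2 * q - 1) z).const_mul _
      have h2 : HasDerivAt (fun z : ℝ => V * ((2 * q : ℕ) * z ^ (2 * q - 1)))
          (V * ((2 * q : ℕ) * ((2 * q - 1 : ℕ) * z ^ (2 * q - 1 - 1)))) z :=
        (((hasDerivAt_pow (2 * q - 1) z).const_mul ((2 * q : ℕ) : ℝ)).const_mul V)
      have h3 := h1.sub h2
      have hexp : 2 * q - 1 - 1 = 2 * q - 2 := by omega
      rw [hexp] at h3
      exact h3.hasDerivWithinAt.congr_deriv (by ring)
    · intro z _
      have key := jensen_pow hg hC hzero (2 * q - 2) ⟨q - 1, by omega⟩ z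
      have h0 : (0 : ℝ) ≤ ((2 * q : ℕ) : ℝ) * ((2 * q - 1 : ℕ) : ℝ) :=
        mul_nonneg (Nat.cast_nonneg _) (Nat.cast_nonneg _)
      exact mul_nonneg h0 (sub_nonneg.2 key)
  have hgi : Integrable g μ := integrable_of_abs_le hg.aestronglyMeasurable hC
  have hgpowi : Integrable (fun x => g x ^ (2 * q)) μ :=
    integrable_of_abs_le ((hg.pow_const _).aestronglyMeasurable)
      (D := C ^ (2 * q)) (fun x => by
        rw [abs_pow]; exact pow_le_pow_left₀ (abs_nonneg _) (hC x) _)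
  -- bound on F
  have hFbound : ∀ t : ℝ, |F t| ≤ V * (C + |t|) ^ (2 * q) := fun t => by
    have := norm_integral_le_of_norm_le (f := fun x => (g x - t) ^ (2 * q))
      (g := fun _ => (C + |t|) ^ (2 * q)) (μ := μ) (integrable_const _)
      (ae_of_all _ fun x => by rw [Real.norm_eq_abs]; exact habs t _ x)
    rwa [Real.norm_eq_abs, integral_const, smul_eq_mul] at this
  have hucont : Continuous u := by
    rw [continuous_iff_continuousAt]; exact fun z => (hdu z).continuousAt
  have hugi : Integrable (fun x => u (g x)) μ := by
    refine integrable_of_abs_le ((hucont.measurable.comp hg).aestronglyMeasurable)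
      (D := V * (C + C) ^ (2 * q) + V * C ^ (2 * q)) (fun x => ?_)
    have h1 : |F (g x)| ≤ V * (C + C) ^ (2 * q) := by
      refine (hFbound (g x)).trans ?_
      have : (C + |g x|) ^ (2 * q) ≤ (C + C) ^ (2 * q) :=
        pow_le_pow_left₀ (by positivity) (by have := hC x; linarith) _
      exact mul_le_mul_of_nonneg_left this hVpos.le
    have h2 : |V * g x ^ (2 * q)| ≤ V * C ^ (2 * q) := by
      rw [abs_mul, abs_of_nonneg hVpos.le, abs_pow]
      exact mul_le_mul_of_nonneg_left
        (pow_le_pow_left₀ (abs_nonneg _) (hC x) _) hVpos.le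
    calc |u (g x)| = |F (g x) - V * g x ^ (2 * q)| := rfl
      _ ≤ |F (g x)| + |V * g x ^ (2 * q)| := abs_sub _ _
      _ ≤ V * (C + C) ^ (2 * q) + V * C ^ (2 * q) := add_le_add h1 h2
  have hFgi : Integrable (fun x => F (g x)) μ := by
    have : (fun x => F (g x)) = fun x => u (g x) + V * g x ^ (2 * q) := by
      funext x; simp only [hu]; ring
    rw [this]
    exact hugi.add (hgpowi.const_mul V)
  -- Jensen for u
  have hjensen := hconv.map_average_le hucont.continuousOn isClosed_univ
    (ae_of_all _ fun x => Set.mem_univ _) hgi hugi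
  have havg0 : (⨍ x, g x ∂μ) = 0 := by
    rw [average_eq, hzero, smul_zero]
  rw [havg0] at hjensen
  have hu0 : u 0 = ∫ x, g x ^ (2 * q) ∂μ := by
    have h2q : 2 * q ≠ 0 := by omega
    simp only [hu, hF, sub_zero, zero_pow h2q, mul_zero]
  have havgu : (⨍ x, u (g x) ∂μ) = V⁻¹ * ((∫ x, F (g x) ∂μ) - V * ∫ x, g x ^ (2 * q) ∂μ) := by
    rw [average_eq, smul_eq_mul]
    congr 1
    have : (fun x => u (g x)) = fun x => F (g x) - V * g x ^ (2 * q) := rfl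
    rw [this, integral_sub hFgi (hgpowi.const_mul V), integral_const_mul]
  rw [hu0, havgu] at hjensen
  have hmain : 2 * V * ∫ x, g x ^ (2 * q) ∂μ ≤ ∫ x, F (g x) ∂μ := by
    have := (mul_le_mul_of_nonneg_left hjensen hVpos.le)
    rw [← mul_assoc, mul_inv_cancel₀ hVne, one_mul] at this
    linarith
  refine hmain.trans (le_of_eq ?_)
  refine integral_congr_ae (ae_of_all _ fun x => ?_)
  simp only [hF]
  refine integral_congr_ae (ae_of_all _ fun y => ?_)
  show (g y - g x) ^ (2 * q) = (g x - g y) ^ (2 * q)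
  rw [show g y - g x = -(g x - g y) by ring, Even.neg_pow ⟨q, by ring⟩]

end Aux

/-- Coercivity lemma: if `f : ℝⁿ → ℝ` is bounded, measurable, `2π`-periodic with zero
average over the period cell, then for every natural `q ≥ 1`,
`∫∫_{[0,2π)ⁿ×[0,2π)ⁿ} (f(x) − f(y))^{2q} dy dx ≥ 2·(2π)ⁿ·∫_{[0,2π)ⁿ} f(x)^{2q} dx`. -/
theorem double_integral_coercivity (n : ℕ) (hn : 1 ≤ n) (q : ℕ) (hq : 1 ≤ q)
    (f : EuclideanSpace ℝ (Fin n) → ℝ) (hmeas : Measurable f)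
    (hbdd : ∃ C : ℝ, ∀ x, |f x| ≤ C)
    (hper : ∀ (x : EuclideanSpace ℝ (Fin n)) (k : Fin n → ℤ),
      f (x + (WithLp.equiv 2 (Fin n → ℝ)).symm (fun i => 2 * Real.pi * (k i))) = f x)
    (hzero : ∫ x in {y : EuclideanSpace ℝ (Fin n) | ∀ i, y i ∈ Set.Ico 0 (2 * Real.pi)}, f x = 0) :
    2 * (2 * Real.pi) ^ n *
        ∫ x in {y : EuclideanSpace ℝ (Fin n) | ∀ i, y i ∈ Set.Ico 0 (2 * Real.pi)}, f x ^ (2 * q) ≤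
      ∫ x in {y : EuclideanSpace ℝ (Fin n) | ∀ i, y i ∈ Set.Ico 0 (2 * Real.pi)},
        ∫ y in {y : EuclideanSpace ℝ (Fin n) | ∀ i, y i ∈ Set.Ico 0 (2 * Real.pi)},
          (f x - f y) ^ (2 * q) := by
  obtain ⟨C, hC⟩ := hbdd
  set Q := {y : EuclideanSpace ℝ (Fin n) | ∀ i, y i ∈ Set.Ico 0 (2 * Real.pi)} with hQ
  have hQpre : Q = (MeasurableEquiv.toLp 2 (Fin n → ℝ)).symm ⁻¹'
      (Set.univ.pi fun _ : Fin n => Set.Ico 0 (2 * Real.pi)) := by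
    ext y
    simp [hQ, Set.mem_pi]
  have hvol : volume Q = ENNReal.ofReal (2 * Real.pi) ^ n := by
    rw [hQpre, (EuclideanSpace.volume_preserving_symm_measurableEquiv_toLp (Fin n)).measure_preimage
      ((MeasurableSet.univ_pi fun i => measurableSet_Ico).nullMeasurableSet)]
    rw [volume_pi_pi]
    simp [Real.volume_Ico]
  have h2pi : (0:ℝ) < 2 * Real.pi := by positivity
  haveI hfin : IsFiniteMeasure (volume.restrict Q) := by
    constructor
    rw [Measure.restrict_apply_univ, hvol]
    exact ENNReal.pow_lt_top ENNReal.ofReal_lt_top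
  haveI hnz : NeZero (volume.restrict Q) := by
    constructor
    intro h
    have : volume Q = 0 := by rw [← Measure.restrict_apply_univ, h]; simp
    rw [hvol] at this
    exact (pow_ne_zero n (by simp [ENNReal.ofReal_eq_zero]; linarith)) this
  have hVeq : ((volume.restrict Q) Set.univ).toReal = (2 * Real.pi) ^ n := by
    rw [Measure.restrict_apply_univ, hvol, ← ENNReal.ofReal_pow h2pi.le,
      ENNReal.toReal_ofReal (by positivity)]
  have key := claimA (μ := volume.restrict Q) hmeas (abs_nonneg C)
    (fun x => (hC x).trans (le_abs_self C)) q hq hzero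
  rwa [hVeq] at key
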